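/- Let m ≥ 1, n = 2^m, let S be a nonempty subset of ZMod n, and let f ∈ S. Set w = |{ν₂(f − g) : g ∈ S, g ≠ f}|. Then there exists G : ZMod n → ℂ whose discrete Fourier transform satisfies Ĝ(f) = 1 and Ĝ(g) = 0 for every g ∈ S with g ≠ f, and whose support has cardinality exactly 2^w. -/

import Mathlib

open scoped BigOperators

/-- The one-dimensional discrete Fourier transform on `ZMod n`:
`x̂(f) = ∑_t x(t) · e^{-2πi·f·t/n}` where `f·t` is computed in `ZMod n`. -/
noncomputable def dft1 (n : ℕ) [NeZero n] (x : ZMod n → ℂ) : ZMod n → ℂ :=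
  fun f => ∑ t : ZMod n, x t *
    Complex.exp (-(2 * (Real.pi : ℂ) * Complex.I) * (((f * t : ZMod n)).val : ℂ) / (n : ℂ))

namespace Stmt1Aux

noncomputable def xi (n : ℕ) : ℂ := Complex.exp (-(2 * (Real.pi : ℂ) * Complex.I) / n)

noncomputable def psi (n : ℕ) [NeZero n] (x : ZMod n) : ℂ := xi n ^ x.val

lemma xi_ne_zero (n : ℕ) : xi n ≠ 0 := Complex.exp_ne_zero _

lemma xi_pow_n (n : ℕ) [NeZero n] : xi n ^ n = 1 := by
  rw [xi, ← Complex.exp_nat_mul]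
  have hn : (n : ℂ) ≠ 0 := Nat.cast_ne_zero.mpr (NeZero.ne n)
  have : (n : ℂ) * (-(2 * (Real.pi : ℂ) * Complex.I) / n) = -(2 * Real.pi * Complex.I) := by
    field_simp
  rw [this, Complex.exp_neg, Complex.exp_two_pi_mul_I, inv_one]

lemma xi_pow_mod (n : ℕ) [NeZero n] (a : ℕ) : xi n ^ a = xi n ^ (a % n) := by
  conv_lhs => rw [← Nat.div_add_mod a n]
  rw [pow_add, pow_mul, xi_pow_n, one_pow, one_mul]

lemma psi_add (n : ℕ) [NeZero n] (x y : ZMod n) : psi n (x + y) = psi n x * psi n y := by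
  rw [psi, psi, psi, ← pow_add, ZMod.val_add, ← xi_pow_mod]

lemma psi_zero (n : ℕ) [NeZero n] : psi n 0 = 1 := by
  simp [psi, ZMod.val_zero]

lemma psi_ne_zero (n : ℕ) [NeZero n] (x : ZMod n) : psi n x ≠ 0 :=
  pow_ne_zero _ (xi_ne_zero n)

lemma psi_natCast (n : ℕ) [NeZero n] (a : ℕ) (ha : a < n) :
    psi n (a : ZMod n) = xi n ^ a := by
  rw [psi, ZMod.val_cast_of_lt ha]

lemma psi_sum (n : ℕ) [NeZero n] {ι : Type*} (A : Finset ι) (h : ι → ZMod n) :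
    psi n (∑ i ∈ A, h i) = ∏ i ∈ A, psi n (h i) := by
  classical
  induction A using Finset.cons_induction with
  | empty => simp [psi_zero]
  | cons a s ha ih => rw [Finset.sum_cons, Finset.prod_cons, psi_add, ih]

lemma dft1_eq (n : ℕ) [NeZero n] (x : ZMod n → ℂ) (g : ZMod n) :
    dft1 n x g = ∑ t : ZMod n, x t * psi n (g * t) := by
  refine Finset.sum_congr rfl fun t _ => ?_
  rw [psi, xi, ← Complex.exp_nat_mul]
  congr 2
  ring

lemma sum_two_pow_lt (m : ℕ) (s : Finset ℕ) (hs : ∀ j ∈ s, j < m) :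
    ∑ j ∈ s, 2 ^ j < 2 ^ m := by
  have h1 : ∑ j ∈ s, 2 ^ j ≤ ∑ j ∈ Finset.range m, 2 ^ j := by
    apply Finset.sum_le_sum_of_subset
    intro j hj
    exact Finset.mem_range.mpr (hs j hj)
  have h2 : ∀ M : ℕ, ∑ j ∈ Finset.range M, 2 ^ j = 2 ^ M - 1 := by
    intro M
    induction M with
    | zero => simp
    | succ k ih =>
      rw [Finset.sum_range_succ, ih, pow_succ]
      have : 1 ≤ 2 ^ k := Nat.one_le_two_pow
      omega
  have : 1 ≤ 2 ^ m := Nat.one_le_two_pow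
  have h3 := h2 m
  omega

end Stmt1Aux

open Stmt1Aux in
theorem stmt1 (m : ℕ) (hm : 1 ≤ m) (n : ℕ) (hn : n = 2 ^ m) [NeZero n]
    (S : Finset (ZMod n)) (hS : S.Nonempty) (f : ZMod n) (hf : f ∈ S)
    (w : ℕ)
    (hw : w = ((S.erase f).image (fun g => padicValNat 2 ((f - g : ZMod n).val))).card) :
    ∃ G : ZMod n → ℂ,
      dft1 n G f = 1 ∧ (∀ g ∈ S, g ≠ f → dft1 n G g = 0) ∧
      (Function.support G).ncard = 2 ^ w := by
  classical
  set V : Finset ℕ := (S.erase f).image (fun g => padicValNat 2 ((f - g : ZMod n).val)) with hV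
  -- every element of V is < m
  have hVlt : ∀ e ∈ V, e < m := by
    intro e he
    obtain ⟨g, hg, rfl⟩ := Finset.mem_image.mp he
    have hgf : g ≠ f := (Finset.mem_erase.mp hg).1
    have hd : (f - g : ZMod n) ≠ 0 := sub_ne_zero.mpr (Ne.symm hgf)
    have hv0 : (f - g : ZMod n).val ≠ 0 := fun h => hd (ZMod.val_eq_zero _ |>.mp h)
    have hvlt : (f - g : ZMod n).val < 2 ^ m := hn ▸ ZMod.val_lt _
    have hdvd : 2 ^ padicValNat 2 ((f - g : ZMod n).val) ∣ (f - g : ZMod n).val :=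
      pow_padicValNat_dvd
    have hle : 2 ^ padicValNat 2 ((f - g : ZMod n).val) ≤ (f - g : ZMod n).val :=
      Nat.le_of_dvd (Nat.pos_of_ne_zero hv0) hdvd
    have : (2:ℕ) ^ padicValNat 2 ((f - g : ZMod n).val) < 2 ^ m := lt_of_le_of_lt hle hvlt
    exact (Nat.pow_lt_pow_iff_right one_lt_two).mp this
  -- the map from subsets of V to ZMod n
  set σ : Finset ℕ → ZMod n := fun A => ((∑ e ∈ A, 2 ^ (m - 1 - e) : ℕ) : ZMod n) with hσ
  -- injectivity of σ on the powerset of V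
  have hflip : ∀ A : Finset ℕ, A ⊆ V → (A.image (fun e => m - 1 - e)).image (fun e => m - 1 - e) = A := by
    intro A hA
    rw [Finset.image_image]
    rw [show A = A.image id from (Finset.image_id).symm]
    rw [Finset.image_image]
    apply Finset.image_congr
    intro e he
    have : e < m := hVlt e (hA (by simpa using he))
    simp only [Function.comp_apply, id_eq]
    omega
  have hnatsum : ∀ A : Finset ℕ, A ⊆ V →
      ∑ e ∈ A, 2 ^ (m - 1 - e) = ∑ j ∈ A.image (fun e => m - 1 - e), 2 ^ j := by
    intro A hA
    rw [Finset.sum_image]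
    intro x hx y hy hxy
    have hxm : x < m := hVlt x (hA hx)
    have hym : y < m := hVlt y (hA hy)
    simp only at hxy
    omega
  have hblt : ∀ A : Finset ℕ, A ⊆ V → ∑ e ∈ A, 2 ^ (m - 1 - e) < 2 ^ m := by
    intro A hA
    rw [hnatsum A hA]
    apply sum_two_pow_lt
    intro j hj
    obtain ⟨e, he, rfl⟩ := Finset.mem_image.mp hj
    have := hm
    omega
  have hσinj : ∀ A ∈ V.powerset, ∀ B ∈ V.powerset, σ A = σ B → A = B := by
    intro A hA B hB hAB
    rw [Finset.mem_powerset] at hA hB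
    have h1 : ∑ e ∈ A, 2 ^ (m - 1 - e) = ∑ e ∈ B, 2 ^ (m - 1 - e) := by
      have := congrArg ZMod.val hAB
      rwa [hσ, ZMod.val_cast_of_lt (hn ▸ hblt A hA), ZMod.val_cast_of_lt (hn ▸ hblt B hB)] at this
    rw [hnatsum A hA, hnatsum B hB] at h1
    have h2 : A.image (fun e => m - 1 - e) = B.image (fun e => m - 1 - e) :=
      Finset.geomSum_injective (le_refl 2) h1
    calc A = (A.image (fun e => m - 1 - e)).image (fun e => m - 1 - e) := (hflip A hA).symm
    _ = (B.image (fun e => m - 1 - e)).image (fun e => m - 1 - e) := by rw [h2]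
    _ = B := hflip B hB
  set T : Finset (ZMod n) := V.powerset.image σ with hT
  have hTcard : T.card = 2 ^ w := by
    rw [hT, Finset.card_image_of_injOn hσinj, Finset.card_powerset, hw]
  -- the function G
  set G : ZMod n → ℂ := fun t => if t ∈ T then (2 ^ w : ℂ)⁻¹ * (psi n (f * t))⁻¹ else 0 with hG
  have h2w : (2 ^ w : ℂ) ≠ 0 := pow_ne_zero w two_ne_zero
  -- key formula
  have key : ∀ g : ZMod n,
      dft1 n G g = (2 ^ w : ℂ)⁻¹ * ∑ A ∈ V.powerset, psi n ((g - f) * σ A) := by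
    intro g
    rw [dft1_eq]
    have step : ∀ t : ZMod n, G t * psi n (g * t)
        = if t ∈ T then (2 ^ w : ℂ)⁻¹ * (psi n (f * t))⁻¹ * psi n (g * t) else 0 := by
      intro t
      rw [hG]
      by_cases ht : t ∈ T <;> simp [ht]
    rw [Finset.sum_congr rfl (fun t _ => step t), Finset.sum_ite_mem, Finset.univ_inter,
      Finset.sum_image hσinj, Finset.mul_sum]
    refine Finset.sum_congr rfl fun A hA => ?_
    have hsplit : psi n (g * σ A) = psi n ((g - f) * σ A) * psi n (f * σ A) := by
      rw [← psi_add]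
      congr 1
      ring
    rw [hsplit]
    field_simp [psi_ne_zero]
  refine ⟨G, ?_, ?_, ?_⟩
  · -- value at f
    rw [key f]
    simp only [sub_self, zero_mul, psi_zero]
    rw [Finset.sum_const, Finset.card_powerset, ← hw, nsmul_eq_mul, mul_one]
    push_cast
    field_simp
  · -- vanishing on S \ {f}
    intro g hg hgf
    rw [key g]
    have hsum : ∑ A ∈ V.powerset, psi n ((g - f) * σ A)
        = ∏ e ∈ V, (psi n ((g - f) * ((2 ^ (m - 1 - e) : ℕ) : ZMod n)) + 1) := by
      rw [Finset.prod_add]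
      refine Finset.sum_congr rfl fun A hA => ?_
      rw [Finset.prod_const_one, mul_one]
      rw [hσ]
      simp only [Nat.cast_sum]
      rw [Finset.mul_sum, psi_sum]
    rw [hsum]
    -- the valuation of f - g
    have hfg : (f - g : ZMod n) ≠ 0 := sub_ne_zero.mpr hgf.symm
    set v : ℕ := (f - g : ZMod n).val with hv
    have hv0 : v ≠ 0 := fun h => hfg (ZMod.val_eq_zero _ |>.mp h)
    have hvlt : v < 2 ^ m := hn ▸ ZMod.val_lt _
    set e₀ : ℕ := padicValNat 2 v with he₀
    have he₀V : e₀ ∈ V := by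
      rw [hV]
      exact Finset.mem_image.mpr ⟨g, Finset.mem_erase.mpr ⟨hgf, hg⟩, rfl⟩
    have he₀m : e₀ < m := hVlt e₀ he₀V
    refine mul_eq_zero.mpr (Or.inr (Finset.prod_eq_zero he₀V ?_))
    -- show psi n ((g - f) * 2^(m-1-e₀)) = -1
    have hdvd : 2 ^ e₀ ∣ v := pow_padicValNat_dvd
    set u : ℕ := v / 2 ^ e₀ with hu
    have huv : v = 2 ^ e₀ * u := (Nat.mul_div_cancel' hdvd).symm
    have hodd : ¬ 2 ∣ u := by
      intro h2u
      have : 2 ^ (e₀ + 1) ∣ v := by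
        obtain ⟨k, hk⟩ := h2u
        exact ⟨k, by rw [huv, hk]; ring⟩
      exact pow_succ_padicValNat_not_dvd hv0 this
    obtain ⟨k, hk⟩ : ∃ k, u = 2 * k + 1 := ⟨u / 2, by omega⟩
    -- (f - g) * 2^(m-1-e₀) = 2^(m-1) in ZMod n
    have hcast : (f - g : ZMod n) = ((v : ℕ) : ZMod n) := by
      rw [hv, ZMod.natCast_val, ZMod.cast_id]
    have hkey : ((f - g : ZMod n)) * ((2 ^ (m - 1 - e₀) : ℕ) : ZMod n)
        = ((2 ^ (m - 1) : ℕ) : ZMod n) := by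
      rw [hcast, ← Nat.cast_mul]
      have : v * 2 ^ (m - 1 - e₀) = k * 2 ^ m + 2 ^ (m - 1) := by
        rw [huv, hk]
        have h1 : e₀ + (m - 1 - e₀) = m - 1 := by omega
        have h2 : m - 1 + 1 = m := by omega
        calc 2 ^ e₀ * (2 * k + 1) * 2 ^ (m - 1 - e₀)
            = (2 * k + 1) * (2 ^ e₀ * 2 ^ (m - 1 - e₀)) := by ring
          _ = (2 * k + 1) * 2 ^ (m - 1) := by rw [← pow_add, h1]
          _ = k * (2 ^ (m - 1) * 2) + 2 ^ (m - 1) := by ring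
          _ = k * 2 ^ m + 2 ^ (m - 1) := by rw [← pow_succ, h2]
      have h0 : ((2 ^ m : ℕ) : ZMod n) = 0 := by rw [← hn]; exact ZMod.natCast_self n
      rw [this, Nat.cast_add, Nat.cast_mul, h0, mul_zero, zero_add]
    -- now (g - f) * 2^(m-1-e₀) = -(2^(m-1)) = 2^(m-1) in ZMod (2^m)
    have hneg : ((2 ^ (m - 1) : ℕ) : ZMod n) = -((2 ^ (m - 1) : ℕ) : ZMod n) := by
      have : ((2 ^ (m - 1) : ℕ) : ZMod n) + ((2 ^ (m - 1) : ℕ) : ZMod n) = 0 := by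
        rw [← Nat.cast_add]
        have heq : (2:ℕ) ^ (m - 1) + 2 ^ (m - 1) = 2 ^ m := by
          rw [← two_mul, ← pow_succ', show m - 1 + 1 = m from by omega]
        rw [heq, ← hn, ZMod.natCast_self]
      linear_combination this
    have hkey2 : ((g - f : ZMod n)) * ((2 ^ (m - 1 - e₀) : ℕ) : ZMod n)
        = ((2 ^ (m - 1) : ℕ) : ZMod n) := by
      have : ((g - f : ZMod n)) = -(f - g) := by ring
      rw [this, neg_mul, hkey, ← hneg]
    rw [hkey2]
    -- psi n (2^(m-1)) = -1
    have hval : psi n ((2 ^ (m - 1) : ℕ) : ZMod n) = -1 := by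
      rw [psi_natCast n _ (by rw [hn]; exact Nat.pow_lt_pow_right one_lt_two (by omega))]
      rw [xi, ← Complex.exp_nat_mul]
      have harg : ((2 ^ (m - 1) : ℕ) : ℂ) * (-(2 * (Real.pi : ℂ) * Complex.I) / n)
          = -(Real.pi * Complex.I) := by
        rw [hn]
        have h2 : (2:ℂ) ^ m = 2 ^ (m - 1) * 2 := by
          rw [← pow_succ, show m - 1 + 1 = m by omega]
        push_cast
        rw [h2]
        have hne : (2:ℂ) ^ (m-1) ≠ 0 := pow_ne_zero _ two_ne_zero
        field_simp
      rw [harg, Complex.exp_neg, Complex.exp_pi_mul_I]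
      norm_num
    rw [hval]
    ring
  · -- support cardinality
    have hsupp : Function.support G = ↑T := by
      ext t
      simp only [Function.mem_support, hG]
      constructor
      · intro h
        by_contra ht
        rw [if_neg (by simpa using ht : t ∉ T)] at h
        exact h rfl
      · intro ht
        rw [if_pos (by simpa using ht : t ∈ T)]
        exact mul_ne_zero (inv_ne_zero h2w) (inv_ne_zero (psi_ne_zero n _))
    rw [hsupp, Set.ncard_coe_finset, hTcard]
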